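/- Let G be a finitely generated group, S a nonempty finite set, and X a subshift of S^G with the right shift action T. Then X is a subshift of finite type if and only if the action of G on X has the pseudo-orbit tracing property. -/

import Mathlib

open Filter Set Topology Uniformity

section Aux

variable {G Sy : Type*} [Finite Sy] [Nonempty Sy]
    [tS : TopologicalSpace Sy] [DiscreteTopology Sy]
    [m : MetricSpace (G → Sy)]

private lemma sft_unif
    (hcompat : m.toUniformSpace.toTopologicalSpace =
      (Pi.topologicalSpace : TopologicalSpace (G → Sy))) :
    (𝓤 (G → Sy)) = ⨅ h : G,
      Filter.comap (fun p : (G → Sy) × (G → Sy) => (p.1 h, p.2 h)) (𝓟 SetRel.id) := by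
  have hS : tS = ⊥ := DiscreteTopology.eq_bot
  subst hS
  letI uS : UniformSpace Sy := ⊥
  have h2 : (Pi.uniformSpace (fun _ : G => Sy)).toTopologicalSpace
      = (Pi.topologicalSpace : TopologicalSpace (G → Sy)) := rfl
  have h3 : m.toUniformSpace = Pi.uniformSpace (fun _ : G => Sy) :=
    unique_uniformity_of_compact (t := Pi.topologicalSpace) hcompat h2
  have h5 : (⨅ h : G, Filter.comap
        (fun p : (G → Sy) × (G → Sy) => (p.1 h, p.2 h)) (𝓟 SetRel.id))
      = 𝓤[Pi.uniformSpace (fun _ : G => Sy)] := (Pi.uniformity (fun _ : G => Sy)).symm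
  rw [h5, ← h3]

/-- Fact A: closeness in the metric implies agreement on any fixed finite window. -/
private lemma sft_factA
    (hcompat : m.toUniformSpace.toTopologicalSpace =
      (Pi.topologicalSpace : TopologicalSpace (G → Sy)))
    (E : Finset G) :
    ∃ δ > (0:ℝ), ∀ u v : G → Sy, dist u v < δ → ∀ h ∈ E, u h = v h := by
  have hmem : {p : (G → Sy) × (G → Sy) | ∀ h ∈ E, p.1 h = p.2 h} ∈ 𝓤 (G → Sy) := by
    rw [sft_unif hcompat]
    have hset : {p : (G → Sy) × (G → Sy) | ∀ h ∈ E, p.1 h = p.2 h}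
        = ⋂ h ∈ E, {p : (G → Sy) × (G → Sy) | p.1 h = p.2 h} := by
      ext p; simp
    rw [hset]
    refine (Filter.biInter_finset_mem E).2 fun h _ => ?_
    refine Filter.mem_iInf_of_mem h ?_
    have hpre : (fun p : (G → Sy) × (G → Sy) => (p.1 h, p.2 h)) ⁻¹' SetRel.id
        = {p : (G → Sy) × (G → Sy) | p.1 h = p.2 h} := by
      ext p; simp [SetRel.id]
    exact hpre ▸ Filter.preimage_mem_comap (Filter.mem_principal_self _)
  obtain ⟨δ, hδ, hd⟩ := Metric.mem_uniformity_dist.1 hmem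
  exact ⟨δ, hδ, fun u v huv => hd huv⟩

/-- Fact B: agreement on a suitable finite window implies closeness in the metric. -/
private lemma sft_factB
    (hcompat : m.toUniformSpace.toTopologicalSpace =
      (Pi.topologicalSpace : TopologicalSpace (G → Sy)))
    (ε : ℝ) (hε : 0 < ε) :
    ∃ E : Finset G, ∀ u v : G → Sy, (∀ h ∈ E, u h = v h) → dist u v < ε := by
  classical
  have hmem : {p : (G → Sy) × (G → Sy) | dist p.1 p.2 < ε} ∈ 𝓤 (G → Sy) :=
    Metric.dist_mem_uniformity hε
  rw [sft_unif hcompat, Filter.mem_iInf'] at hmem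
  obtain ⟨I, Ifin, V, hV, hVuniv, -, hU⟩ := hmem
  refine ⟨Ifin.toFinset, fun u v huv => ?_⟩
  have hmem2 : (u, v) ∈ ⋂ i, V i := by
    refine Set.mem_iInter.2 fun i => ?_
    by_cases hi : i ∈ I
    · obtain ⟨U', hU'1, hU'2⟩ := Filter.mem_comap.1 (hV i)
      apply hU'2
      have huvi : u i = v i := huv i (Ifin.mem_toFinset.2 hi)
      exact Set.mem_preimage.2 (Filter.mem_principal.1 hU'1 (by simp [SetRel.id, huvi]))
    · rw [hVuniv i hi]; trivial
  rw [← hU] at hmem2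
  exact hmem2

end Aux

/-- Every group element is the product of a list of generators, given a symmetric
generating set. -/
private lemma sft_word {G : Type*} [Group G] (A : Finset G)
    (hAgen : Subgroup.closure (A : Set G) = ⊤) (hAsymm : ∀ a ∈ A, a⁻¹ ∈ A) (g : G) :
    ∃ l : List G, (∀ a ∈ l, a ∈ A) ∧ l.prod = g := by
  have hg : g ∈ Subgroup.closure (A : Set G) := by rw [hAgen]; trivial
  refine Subgroup.closure_induction (k := (A : Set G))
    (p := fun x _ => ∃ l : List G, (∀ a ∈ l, a ∈ A) ∧ l.prod = x)
    ?_ ?_ ?_ ?_ hg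
  · intro x hx
    exact ⟨[x], by simpa using hx, by simp⟩
  · exact ⟨[], by simp, rfl⟩
  · rintro x y _ _ ⟨l₁, h₁, e₁⟩ ⟨l₂, h₂, e₂⟩
    refine ⟨l₁ ++ l₂, ?_, by rw [List.prod_append, e₁, e₂]⟩
    intro a ha
    rcases List.mem_append.1 ha with h | h
    · exact h₁ a h
    · exact h₂ a h
  · rintro x _ ⟨l, hl, e⟩
    refine ⟨(l.map fun b => b⁻¹).reverse, ?_, ?_⟩
    · intro a ha
      rw [List.mem_reverse, List.mem_map] at ha
      obtain ⟨b, hb, rfl⟩ := ha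
      exact hAsymm b (hl b hb)
    · rw [← List.prod_inv_reverse, e]

/-- A subshift `X` of the full shift `S^G` (right shift action `(gx)_h = x_{hg}`, product
topology with a compatible metric) is of finite type iff the shift action of `G` on `X`
has the pseudo-orbit tracing property. -/
theorem sft_iff_potp
    {G Sy : Type*} [Group G] [Finite Sy] [Nonempty Sy]
    [TopologicalSpace Sy] [DiscreteTopology Sy]
    [m : MetricSpace (G → Sy)]
    (hcompat : m.toUniformSpace.toTopologicalSpace =
      (Pi.topologicalSpace : TopologicalSpace (G → Sy)))
    (A : Finset G) (hAgen : Subgroup.closure (A : Set G) = ⊤)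
    (hAsymm : ∀ a ∈ A, a⁻¹ ∈ A)
    (X : Set (G → Sy)) (hXclosed : IsClosed X)
    (hXinv : ∀ g : G, ∀ x ∈ X, (fun h : G => x (h * g)) ∈ X) :
    (∃ (F : Finset G) (P : Set (F → Sy)), F.Nonempty ∧
        X = {x : G → Sy | ∀ g : G, (fun a : F => x ((a : G) * g)) ∈ P}) ↔
    (∀ ε > (0 : ℝ), ∃ δ > (0 : ℝ), ∀ xs : G → (G → Sy), (∀ g : G, xs g ∈ X) →
        (∀ a ∈ A, ∀ g : G, dist (fun h : G => xs g (h * a)) (xs (a * g)) < δ) →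
        ∃ x ∈ X, ∀ g : G, dist (fun h : G => x (h * g)) (xs g) < ε) := by
  classical
  constructor
  · -- SFT implies POTP
    rintro ⟨F, P, -, hXP⟩ ε hε
    obtain ⟨E, hE⟩ := sft_factB hcompat ε hε
    -- Key induction on words: values of a pseudo-orbit propagate along generators.
    have key : ∀ l : List G, ∀ E' : Finset G, (∀ a ∈ l, a ∈ A) → ∃ δ > (0:ℝ),
        ∀ xs : G → (G → Sy),
          (∀ a ∈ A, ∀ g : G, dist (fun h : G => xs g (h * a)) (xs (a * g)) < δ) →
          ∀ g : G, ∀ h ∈ E', xs (l.prod * g) h = xs g (h * l.prod) := by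
      intro l
      induction l with
      | nil =>
        intro E' _
        exact ⟨1, one_pos, fun xs _ g h _ => by simp⟩
      | cons a t ih =>
        intro E' hl
        have ha : a ∈ A := hl a (List.mem_cons_self)
        obtain ⟨δ₁, hδ₁, h₁⟩ := sft_factA hcompat E'
        obtain ⟨δ₂, hδ₂, h₂⟩ :=
          ih (E'.image (· * a)) (fun b hb => hl b (List.mem_cons_of_mem a hb))
        refine ⟨min δ₁ δ₂, lt_min hδ₁ hδ₂, fun xs hxs g h hh => ?_⟩
        have hps : dist (fun h' : G => xs (t.prod * g) (h' * a)) (xs (a * (t.prod * g))) < δ₁ :=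
          lt_of_lt_of_le (hxs a ha (t.prod * g)) (min_le_left _ _)
        have step1 : xs (t.prod * g) (h * a) = xs (a * (t.prod * g)) h :=
          h₁ _ _ hps h hh
        have hxs2 : ∀ a' ∈ A, ∀ g' : G,
            dist (fun h' : G => xs g' (h' * a')) (xs (a' * g')) < δ₂ :=
          fun a' ha' g' => lt_of_lt_of_le (hxs a' ha' g') (min_le_right _ _)
        have step2 : xs (t.prod * g) (h * a) = xs g (h * a * t.prod) :=
          h₂ xs hxs2 g (h * a) (Finset.mem_image_of_mem _ hh)
        calc xs ((a :: t).prod * g) h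
            = xs (a * (t.prod * g)) h := by rw [List.prod_cons, mul_assoc]
          _ = xs (t.prod * g) (h * a) := step1.symm
          _ = xs g (h * a * t.prod) := step2
          _ = xs g (h * (a :: t).prod) := by rw [List.prod_cons, mul_assoc]
    -- Combine over a finite window.
    have main : ∀ W : Finset G, ∃ δ > (0:ℝ), ∀ xs : G → (G → Sy),
        (∀ a ∈ A, ∀ g : G, dist (fun h : G => xs g (h * a)) (xs (a * g)) < δ) →
        ∀ g : G, ∀ h ∈ W, xs (h * g) 1 = xs g h := by
      intro W
      induction W using Finset.induction_on with
      | empty => exact ⟨1, one_pos, fun xs _ g h hh => absurd hh (Finset.notMem_empty h)⟩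
      | @insert b W hb ih =>
        obtain ⟨l, hlA, hlp⟩ := sft_word A hAgen hAsymm b
        obtain ⟨δ₁, hδ₁, h₁⟩ := key l {1} hlA
        obtain ⟨δ₂, hδ₂, h₂⟩ := ih
        refine ⟨min δ₁ δ₂, lt_min hδ₁ hδ₂, fun xs hxs g h hh => ?_⟩
        rcases Finset.mem_insert.1 hh with rfl | hh'
        · have := h₁ xs
            (fun a' ha' g' => lt_of_lt_of_le (hxs a' ha' g') (min_le_left _ _))
            g 1 (Finset.mem_singleton_self 1)
          rw [hlp] at this
          simpa using this
        · exact h₂ xs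
            (fun a' ha' g' => lt_of_lt_of_le (hxs a' ha' g') (min_le_right _ _)) g h hh'
    obtain ⟨δ, hδ, hmain⟩ := main (E ∪ F)
    refine ⟨δ, hδ, fun xs hxsX hxsp => ⟨fun g => xs g 1, ?_, ?_⟩⟩
    · rw [hXP]
      intro g
      have hxmem := hxsX g
      rw [hXP] at hxmem
      have hP := hxmem 1
      have heq : (fun a : F => xs ((a:G) * g) 1) = fun a : F => xs g ((a:G) * 1) := by
        funext a
        rw [mul_one]
        exact hmain xs hxsp g a (Finset.mem_union_right E a.2)
      show (fun a : F => xs ((a:G) * g) 1) ∈ P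
      rw [heq]
      exact hP
    · intro g
      exact hE _ _ (fun h hh => hmain xs hxsp g h (Finset.mem_union_left F hh))
  · -- POTP implies SFT
    intro hpotp
    obtain ⟨ε, hε, hεag⟩ := sft_factA hcompat ({1} : Finset G)
    obtain ⟨δ, hδ, htr⟩ := hpotp ε hε
    obtain ⟨K, hK⟩ := sft_factB hcompat δ hδ
    set F : Finset G := insert (1:G) (K ∪ A.biUnion fun a => K.image (· * a)) with hF
    refine ⟨F, (fun x : G → Sy => fun a : F => x (a:G)) '' X,
      ⟨1, Finset.mem_insert_self _ _⟩, ?_⟩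
    ext y
    constructor
    · intro hy g
      exact ⟨fun h => y (h * g), hXinv g y hy, rfl⟩
    · intro hy
      have hy' : ∀ g : G, ∃ x, x ∈ X ∧ (fun a : F => x (a:G)) = fun a : F => y ((a:G) * g) :=
        fun g => hy g
      choose xs hxsX hxseq using hy'
      have hxsval : ∀ g : G, ∀ h : G, h ∈ F → xs g h = y (h * g) := by
        intro g h hh
        exact congrFun (hxseq g) ⟨h, hh⟩
      have hmemK : ∀ h ∈ K, h ∈ F := fun h hh =>
        Finset.mem_insert_of_mem (Finset.mem_union_left _ hh)
      have hps : ∀ a ∈ A, ∀ g : G,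
          dist (fun h : G => xs g (h * a)) (xs (a * g)) < δ := by
        intro a haA g
        apply hK
        intro h hh
        have hha : h * a ∈ F := Finset.mem_insert_of_mem (Finset.mem_union_right _
          (Finset.mem_biUnion.2 ⟨a, haA, Finset.mem_image_of_mem _ hh⟩))
        show xs g (h * a) = xs (a * g) h
        rw [hxsval g (h * a) hha, hxsval (a * g) h (hmemK h hh), mul_assoc]
      obtain ⟨x, hxX, hxtr⟩ := htr xs hxsX hps
      have hyx : y = x := by
        funext g
        have h1 : x (1 * g) = xs g 1 :=
          hεag _ _ (hxtr g) 1 (Finset.mem_singleton_self 1)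
        have h2 : xs g 1 = y (1 * g) := hxsval g 1 (Finset.mem_insert_self _ _)
        calc y g = y (1 * g) := by rw [one_mul]
          _ = xs g 1 := h2.symm
          _ = x (1 * g) := h1.symm
          _ = x g := by rw [one_mul]
      rw [hyx]
      exact hxX
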